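/- Let (Ω,ℱ,ℙ) be a probability space with filtration (ℱ_k)_{k≥0}, let (z_k)_{k≥0} be an adapted sequence of ℝ^d-valued random variables with z_0 almost surely equal to a fixed vector, let b > 0 with ‖z_0‖ ≤ b, let ρ ∈ (0,1), and suppose the conditional contraction hypothesis holds. Define τ_b := min{j ≥ 0 : ‖z_j‖ > b} (= ∞ if no such j). Then for every k ≥ 1 and every a > 0, ℙ(‖z_k‖ ≥ ρ^{k/2}·a) ≤ (‖z_0‖/a)² + ℙ(τ_b < ∞). -/

import Mathlib

open MeasureTheory

/-- Under the conditional contraction hypothesis, for every `k ≥ 1` and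
`a > 0`, `ℙ(‖z_k‖ ≥ ρ^{k/2}·a) ≤ (‖z_0‖/a)² + ℙ(τ_b < ∞)`, where
`τ_b = min{j : ‖z_j‖ > b}` so that `{τ_b < ∞} = {∃ j, ‖z_j‖ > b}`. -/
theorem error_tail_probability_bound (d : ℕ) (Ω : Type) [m0 : MeasurableSpace Ω]
    (P : Measure Ω) [IsProbabilityMeasure P] (ℱ : Filtration ℕ m0)
    (z : ℕ → Ω → EuclideanSpace ℝ (Fin d)) (hadapt : Adapted ℱ z)
    (z0 : EuclideanSpace ℝ (Fin d)) (hz0 : ∀ᵐ ω ∂P, z 0 ω = z0)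
    (hint : ∀ k, Integrable (fun ω => ‖z k ω‖ ^ 2) P)
    (b : ℝ) (hb : 0 < b) (hz0b : ‖z0‖ ≤ b)
    (ρ : ℝ) (hρ : ρ ∈ Set.Ioo (0 : ℝ) 1)
    (hcontr : ∀ k : ℕ, ∀ᵐ ω ∂P, ‖z k ω‖ ≤ b →
      (P[fun ω' => ‖z (k + 1) ω'‖ ^ 2 | ℱ k]) ω ≤ ρ * ‖z k ω‖ ^ 2) :
    ∀ k : ℕ, 1 ≤ k → ∀ a : ℝ, 0 < a →
      (P {ω | ρ ^ ((k : ℝ) / 2) * a ≤ ‖z k ω‖}).toReal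
        ≤ (‖z0‖ / a) ^ 2 + (P {ω | ∃ j : ℕ, b < ‖z j ω‖}).toReal := by
  intro k hk a ha
  set S : ℕ → Set Ω := fun n => {ω | ∀ j ≤ n, ‖z j ω‖ ≤ b} with hSdef
  have hSmeas : ∀ n, MeasurableSet[ℱ n] (S n) := by
    intro n
    have : S n = ⋂ j, ⋂ (_ : j ≤ n), (fun ω => ‖z j ω‖) ⁻¹' Set.Iic b := by
      ext ω; simp [hSdef]
    rw [this]
    exact MeasurableSet.iInter fun j => MeasurableSet.iInter fun hj =>
      ℱ.mono hj _ ((measurable_norm.comp (hadapt j)) measurableSet_Iic)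
  have hSmeas0 : ∀ n, MeasurableSet (S n) := fun n => ℱ.le n _ (hSmeas n)
  have key : ∀ n, ∫ ω in S n, ‖z n ω‖ ^ 2 ∂P ≤ ρ ^ n * ‖z0‖ ^ 2 := by
    intro n
    induction n with
    | zero =>
      simp only [pow_zero, one_mul]
      calc ∫ ω in S 0, ‖z 0 ω‖ ^ 2 ∂P ≤ ∫ ω, ‖z 0 ω‖ ^ 2 ∂P :=
            setIntegral_le_integral (hint 0) (ae_of_all _ fun ω => by positivity)
        _ = ∫ _ω : Ω, ‖z0‖ ^ 2 ∂P := integral_congr_ae (hz0.mono fun ω h => by simp only [h])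
        _ = ‖z0‖ ^ 2 := by simp
    | succ n ih =>
      have hsub : S (n + 1) ⊆ S n := fun ω h j hj => h j (hj.trans (Nat.le_succ n))
      have hres : ∀ᵐ ω ∂P.restrict (S n),
          (P[fun ω' => ‖z (n + 1) ω'‖ ^ 2 | ℱ n]) ω ≤ ρ * ‖z n ω‖ ^ 2 := by
        filter_upwards [ae_restrict_of_ae (hcontr n), ae_restrict_mem (hSmeas0 n)] with ω h hmem
        exact h (hmem n le_rfl)
      calc ∫ ω in S (n + 1), ‖z (n + 1) ω‖ ^ 2 ∂P
          ≤ ∫ ω in S n, ‖z (n + 1) ω‖ ^ 2 ∂P :=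
            setIntegral_mono_set (hint (n + 1)).integrableOn
              (ae_of_all _ fun ω => by positivity) (HasSubset.Subset.eventuallyLE hsub)
        _ = ∫ ω in S n, (P[fun ω' => ‖z (n + 1) ω'‖ ^ 2 | ℱ n]) ω ∂P :=
            (setIntegral_condExp (ℱ.le n) (hint (n + 1)) (hSmeas n)).symm
        _ ≤ ∫ ω in S n, ρ * ‖z n ω‖ ^ 2 ∂P :=
            setIntegral_mono_ae_restrict integrable_condExp.integrableOn
              (((hint n).const_mul ρ).integrableOn) hres
        _ = ρ * ∫ ω in S n, ‖z n ω‖ ^ 2 ∂P := integral_const_mul ρ _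
        _ ≤ ρ * (ρ ^ n * ‖z0‖ ^ 2) := mul_le_mul_of_nonneg_left ih hρ.1.le
        _ = ρ ^ (n + 1) * ‖z0‖ ^ 2 := by ring
  set A : Set Ω := {ω | ρ ^ ((k : ℝ) / 2) * a ≤ ‖z k ω‖} with hAdef
  have hAmeas : MeasurableSet A := by
    have : A = (fun ω => ‖z k ω‖) ⁻¹' Set.Ici (ρ ^ ((k : ℝ) / 2) * a) := rfl
    rw [this]
    exact (measurable_norm.comp ((hadapt k).mono (ℱ.le k) le_rfl)) measurableSet_Ici
  have hrpow : (ρ ^ ((k : ℝ) / 2)) ^ 2 = ρ ^ k := by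
    rw [← Real.rpow_natCast (ρ ^ ((k : ℝ) / 2)) 2, ← Real.rpow_mul hρ.1.le,
      ← Real.rpow_natCast ρ k]
    norm_num
  have hc : ∀ ω ∈ A ∩ S k, ρ ^ k * a ^ 2 ≤ ‖z k ω‖ ^ 2 := by
    intro ω hω
    have h1 : (ρ ^ ((k : ℝ) / 2) * a) ^ 2 ≤ ‖z k ω‖ ^ 2 := by
      have h0 : (0 : ℝ) ≤ ρ ^ ((k : ℝ) / 2) * a :=
        mul_nonneg (Real.rpow_nonneg hρ.1.le _) ha.le
      exact pow_le_pow_left₀ h0 hω.1 2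
    calc ρ ^ k * a ^ 2 = (ρ ^ ((k : ℝ) / 2) * a) ^ 2 := by rw [mul_pow, hrpow]
      _ ≤ ‖z k ω‖ ^ 2 := h1
  have hmarkov : ρ ^ k * a ^ 2 * (P (A ∩ S k)).toReal ≤ ρ ^ k * ‖z0‖ ^ 2 := by
    have h1 : ∫ _ω in A ∩ S k, ρ ^ k * a ^ 2 ∂P ≤ ∫ ω in A ∩ S k, ‖z k ω‖ ^ 2 ∂P :=
      setIntegral_mono_on (integrableOn_const (measure_ne_top _ _))
        ((hint k).integrableOn) (hAmeas.inter (hSmeas0 k)) hc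
    have h2 : ∫ ω in A ∩ S k, ‖z k ω‖ ^ 2 ∂P ≤ ∫ ω in S k, ‖z k ω‖ ^ 2 ∂P :=
      setIntegral_mono_set ((hint k).integrableOn)
        (ae_of_all _ fun ω => by positivity)
        (HasSubset.Subset.eventuallyLE Set.inter_subset_right)
    have h3 : ∫ _ω in A ∩ S k, ρ ^ k * a ^ 2 ∂P
        = (P (A ∩ S k)).toReal * (ρ ^ k * a ^ 2) := by
      rw [setIntegral_const]; simp [smul_eq_mul, measureReal_def]
    calc ρ ^ k * a ^ 2 * (P (A ∩ S k)).toReal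
        = ∫ _ω in A ∩ S k, ρ ^ k * a ^ 2 ∂P := by rw [h3]; ring
      _ ≤ ∫ ω in S k, ‖z k ω‖ ^ 2 ∂P := h1.trans h2
      _ ≤ ρ ^ k * ‖z0‖ ^ 2 := key k
  have hρk : (0 : ℝ) < ρ ^ k := pow_pos hρ.1 k
  have hPAS : (P (A ∩ S k)).toReal ≤ (‖z0‖ / a) ^ 2 := by
    have := (le_div_iff₀ (by positivity : (0:ℝ) < ρ ^ k * a ^ 2)).2
      (by linarith [hmarkov] : (P (A ∩ S k)).toReal * (ρ ^ k * a ^ 2) ≤ ρ ^ k * ‖z0‖ ^ 2)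
    calc (P (A ∩ S k)).toReal ≤ ρ ^ k * ‖z0‖ ^ 2 / (ρ ^ k * a ^ 2) := this
      _ = ‖z0‖ ^ 2 / a ^ 2 := by field_simp
      _ = (‖z0‖ / a) ^ 2 := (div_pow _ _ _).symm
  have hcompl : (S k)ᶜ ⊆ {ω | ∃ j : ℕ, b < ‖z j ω‖} := by
    intro ω hω
    simp only [hSdef, Set.mem_compl_iff, Set.mem_setOf_eq, not_forall, not_le] at hω ⊢
    obtain ⟨j, _, hj⟩ := hω
    exact ⟨j, hj⟩
  have hsplit : P A ≤ P (A ∩ S k) + P ((S k)ᶜ) := by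
    refine le_trans (measure_mono ?_) (measure_union_le _ _)
    intro ω hω
    by_cases h : ω ∈ S k
    · exact Or.inl ⟨hω, h⟩
    · exact Or.inr h
  have htoReal : (P A).toReal ≤ (P (A ∩ S k)).toReal + (P ((S k)ᶜ)).toReal := by
    rw [← ENNReal.toReal_add (measure_ne_top P _) (measure_ne_top P _)]
    exact ENNReal.toReal_mono (by finiteness) hsplit
  have hlast : (P ((S k)ᶜ)).toReal ≤ (P {ω | ∃ j : ℕ, b < ‖z j ω‖}).toReal :=
    ENNReal.toReal_mono (measure_ne_top P _) (measure_mono hcompl)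
  calc (P A).toReal ≤ (P (A ∩ S k)).toReal + (P ((S k)ᶜ)).toReal := htoReal
    _ ≤ (‖z0‖ / a) ^ 2 + (P {ω | ∃ j : ℕ, b < ‖z j ω‖}).toReal :=
      add_le_add hPAS hlast
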